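/- arXiv:0912.4164 — 2 statements merged into one kernel-verified Lean document; each statement's English description precedes it below -/
import Mathlib

section
/- Let X, Y, Z be nonempty closed sets in a proper geodesic metric space M, let D = dom(X, Y) and C = bisect(X, Y). If D and Z are disjoint, then dom(D, Z) = dom(C, Z) and dom(Z, D) = dom(Z, C). -/
open Metric Set

/-- The bisector of two sets: points equidistant from `X` and `Y`. -/
def bisect {M : Type*} [MetricSpace M] (X Y : Set M) : Set M :=
  {z | infDist z X = infDist z Y}

/-- The dominance region of `X` over `Y`: points at least as close to `X` as to `Y`. -/
def domReg {M : Type*} [MetricSpace M] (X Y : Set M) : Set M :=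
  {z | infDist z X ≤ infDist z Y}

/-- A metric space is geodesic if any two distinct points are joined by a metric
segment, i.e. an isometric image of a real interval. -/
def IsGeodesicSpace (M : Type*) [MetricSpace M] : Prop :=
  ∀ x y : M, x ≠ y → ∃ (a b : ℝ) (γ : ℝ → M), a ≤ b ∧ γ a = x ∧ γ b = y ∧
    ∀ s ∈ Set.Icc a b, ∀ t ∈ Set.Icc a b, dist (γ s) (γ t) = |s - t|

section Aux

variable {M : Type*} [MetricSpace M]

lemma geo_continuousOn {a b : ℝ} {γ : ℝ → M}
    (h : ∀ s ∈ Icc a b, ∀ t ∈ Icc a b, dist (γ s) (γ t) = |s - t|) :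
    ContinuousOn γ (Icc a b) := by
  rw [Metric.continuousOn_iff]
  intro t ht ε hε
  exact ⟨ε, hε, fun s hs hst => by
    rw [h s hs t ht]; simpa [Real.dist_eq] using hst⟩

/-- A geodesic from a point of `D = dom(X,Y)` to a point strictly outside `D`
crosses the bisector strictly before its endpoint. -/
lemma key_cross {X Y : Set M} (hgeo : IsGeodesicSpace M)
    {w z : M} (hw : infDist w X ≤ infDist w Y) (hz : infDist z Y < infDist z X)
    (hwz : w ≠ z) :
    ∃ q ∈ bisect X Y, dist w q < dist w z := by
  obtain ⟨a, b, γ, hab, hga, hgb, hiso⟩ := hgeo w z hwz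
  have hcont : ContinuousOn (fun t => infDist (γ t) X - infDist (γ t) Y) (Icc a b) :=
    ((continuous_infDist_pt X).sub (continuous_infDist_pt Y)).comp_continuousOn
      (geo_continuousOn hiso)
  have h0 : (0:ℝ) ∈ Icc (infDist (γ a) X - infDist (γ a) Y)
      (infDist (γ b) X - infDist (γ b) Y) := by
    rw [hga, hgb]; constructor <;> [linarith; linarith]
  obtain ⟨t, ht, h0t⟩ := intermediate_value_Icc hab hcont h0
  have h0t' : infDist (γ t) X - infDist (γ t) Y = 0 := h0t
  refine ⟨γ t, sub_eq_zero.mp h0t', ?_⟩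
  have htb : t ≠ b := by
    intro h; rw [h, hgb] at h0t'; linarith
  have h1 : dist w (γ t) = t - a := by
    rw [← hga, hiso a ⟨le_refl a, hab⟩ t ht, abs_sub_comm,
      abs_of_nonneg (by linarith [ht.1])]
  have h2 : dist w z = b - a := by
    rw [← hga, ← hgb, hiso a ⟨le_refl a, hab⟩ b ⟨hab, le_refl b⟩, abs_sub_comm,
      abs_of_nonneg (by linarith)]
  rw [h1, h2]
  have : t < b := lt_of_le_of_ne ht.2 htb
  linarith

/-- The nearest-point projection onto `D = dom(X,Y)` of a point strictly outside `D`
lies on the bisector. -/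
lemma proj_bisect {X Y : Set M} (hgeo : IsGeodesicSpace M)
    {w p : M} (hw : infDist w Y < infDist w X) (hp : infDist p X ≤ infDist p Y)
    (hmin : ∀ q : M, infDist q X ≤ infDist q Y → dist w p ≤ dist w q) :
    infDist p X = infDist p Y := by
  rcases hp.lt_or_eq with hlt | he
  · exfalso
    have hU : IsOpen {z : M | infDist z X - infDist z Y < 0} :=
      isOpen_lt ((continuous_infDist_pt X).sub (continuous_infDist_pt Y)) continuous_const
    have hpU : p ∈ {z : M | infDist z X - infDist z Y < 0} := by
      simp only [mem_setOf_eq]; linarith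
    obtain ⟨ε, hε, hball⟩ := Metric.isOpen_iff.mp hU p hpU
    have hwp : w ≠ p := by intro h; rw [h] at hw; linarith
    obtain ⟨a, b, γ, hab, hga, hgb, hiso⟩ := hgeo w p hwp
    have hd : dist w p = b - a := by
      rw [← hga, ← hgb, hiso a ⟨le_refl a, hab⟩ b ⟨hab, le_refl b⟩, abs_sub_comm,
        abs_of_nonneg (by linarith)]
    have haltb : a < b := by
      rcases hab.lt_or_eq with h | h
      · exact h
      · exfalso; apply hwp; rw [← hga, ← hgb, h]
    set t := max a (b - ε/2) with htdef
    have hta : a ≤ t := le_max_left _ _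
    have htb : t < b := max_lt haltb (by linarith)
    have htI : t ∈ Icc a b := ⟨hta, htb.le⟩
    have hdt : dist (γ t) p = b - t := by
      rw [← hgb, hiso t htI b ⟨hab, le_refl b⟩, abs_of_nonpos (by linarith), neg_sub]
    have htB : γ t ∈ Metric.ball p ε := by
      rw [Metric.mem_ball, hdt]
      have : b - ε/2 ≤ t := le_max_right _ _
      linarith
    have hmem : infDist (γ t) X ≤ infDist (γ t) Y := by
      have := hball htB; simp only [mem_setOf_eq] at this; linarith
    have hle := hmin (γ t) hmem
    have hdw : dist w (γ t) = t - a := by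
      rw [← hga, hiso a ⟨le_refl a, hab⟩ t htI, abs_sub_comm,
        abs_of_nonneg (by linarith)]
    rw [hd, hdw] at hle
    linarith
  · exact he

end Aux

/-- If the dominance region `D = dom(X,Y)` is disjoint from `Z`, then dominance
regions with respect to `D` and with respect to `C = bisect(X,Y)` coincide. -/
theorem dom_of_dom_eq_dom_of_bisect {M : Type*} [MetricSpace M] [ProperSpace M]
    (hgeo : IsGeodesicSpace M)
    (X Y Z : Set M) (hX : X.Nonempty) (hY : Y.Nonempty) (hZ : Z.Nonempty)
    (hXcl : IsClosed X) (hYcl : IsClosed Y) (hZcl : IsClosed Z)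
    (hdisj : Disjoint (domReg X Y) Z) :
    domReg (domReg X Y) Z = domReg (bisect X Y) Z ∧
    domReg Z (domReg X Y) = domReg Z (bisect X Y) := by
  set D := domReg X Y with hD
  set C := bisect X Y with hC
  have hCD : C ⊆ D := fun q hq => le_of_eq hq
  have hXD : X ⊆ D := fun x hx => by
    show infDist x X ≤ infDist x Y
    rw [infDist_zero_of_mem hx]
    exact infDist_nonneg
  have hDne : D.Nonempty := hX.mono hXD
  have hDcl : IsClosed D := by
    have : D = {z : M | infDist z X - infDist z Y ≤ 0} := by
      ext z; simp [hD, domReg, sub_nonpos]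
    rw [this]
    exact isClosed_le ((continuous_infDist_pt X).sub (continuous_infDist_pt Y))
      continuous_const
  -- Fact A : for w ∈ D, infDist w C < infDist w Z
  have factA : ∀ w ∈ D, infDist w C < infDist w Z := by
    intro w hwD
    obtain ⟨z, hzZ, hz⟩ := hZcl.exists_infDist_eq_dist hZ w
    have hzD : z ∉ D := fun h => (Set.disjoint_left.mp hdisj h) hzZ
    have hz' : infDist z Y < infDist z X := not_le.mp hzD
    have hwz : w ≠ z := fun h => hzD (h ▸ hwD)
    obtain ⟨q, hqC, hq⟩ := key_cross hgeo hwD hz' hwz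
    calc infDist w C ≤ dist w q := infDist_le_dist_of_mem hqC
      _ < dist w z := hq
      _ = infDist w Z := hz.symm
  have hCne : C.Nonempty := by
    obtain ⟨x, hx⟩ := hX
    obtain ⟨z, hzZ, hz⟩ := hZcl.exists_infDist_eq_dist hZ x
    have hzD : z ∉ D := fun h => (Set.disjoint_left.mp hdisj h) hzZ
    have hz' : infDist z Y < infDist z X := not_le.mp hzD
    have hwz : x ≠ z := fun h => hzD (h ▸ hXD hx)
    obtain ⟨q, hqC, _⟩ := key_cross hgeo (hXD hx) hz' hwz
    exact ⟨q, hqC⟩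
  have hDC : ∀ w : M, infDist w D ≤ infDist w C :=
    fun w => infDist_le_infDist_of_subset hCD hCne
  -- Fact B : for w ∉ D, infDist w C = infDist w D
  have factB : ∀ w ∉ D, infDist w C = infDist w D := by
    intro w hw
    have hw' : infDist w Y < infDist w X := not_le.mp hw
    obtain ⟨p, hpD, hp⟩ := hDcl.exists_infDist_eq_dist hDne w
    have hmin : ∀ q : M, infDist q X ≤ infDist q Y → dist w p ≤ dist w q := by
      intro q hq
      rw [← hp]
      exact infDist_le_dist_of_mem hq
    have hpC : p ∈ C := proj_bisect hgeo hw' hpD hmin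
    refine le_antisymm ?_ (hDC w)
    calc infDist w C ≤ dist w p := infDist_le_dist_of_mem hpC
      _ = infDist w D := hp.symm
  constructor
  · ext w
    simp only [domReg, mem_setOf_eq]
    constructor
    · intro h
      by_cases hwD : w ∈ D
      · exact (factA w hwD).le
      · rw [factB w hwD]; exact h
    · intro h
      exact le_trans (hDC w) h
  · ext w
    simp only [domReg, mem_setOf_eq]
    constructor
    · intro h
      exact le_trans h (hDC w)
    · intro h
      by_cases hwD : w ∈ D
      · exact absurd (lt_of_le_of_lt h (factA w hwD)) (lt_irrefl _)
      · rw [← factB w hwD]; exact h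
end

section
/- Let P and Q be disjoint nonempty closed sets in Euclidean space ℝ^d and let k ≥ 2. For (k−1)-tuples (R_i, S_i)_{i=1}^{k−1} of pairs of subsets of ℝ^d with P ⊆ R_i, Q ⊆ S_i and R_i ∪ S_i = ℝ^d for all i, define F((R_i, S_i)_i) = (dom(R_{i−1}, S_{i+1}), dom(S_{i+1}, R_{i−1}))_i where R_0 = P and S_k = Q. Suppose (R⁰_i, S⁰_i)_i is such a tuple satisfying R⁰_i ⊆ R¹_i and S⁰_i ⊇ S¹_i for all i, where (R^{n+1}_i, S^{n+1}_i)_i := F((R^n_i, S^n_i)_i) for each n ∈ ℕ. Let R^∞_i = ⋃_{n∈ℕ} R^n_i and S^∞_i = ⋂_{n∈ℕ} S^n_i. Then the tuple (closure(R^∞_i), S^∞_i)_{i=1}^{k−1} is a k-gradation between P and Q. -/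
open Metric Set

lemma domReg_isClosed {M : Type*} [MetricSpace M] (X Y : Set M) : IsClosed (domReg X Y) :=
  isClosed_le (continuous_infDist_pt X) (continuous_infDist_pt Y)

lemma domReg_mono {M : Type*} [MetricSpace M] {X X' Y Y' : Set M}
    (hX : X ⊆ X') (hXne : X.Nonempty) (hY : Y' ⊆ Y) (hYne : Y'.Nonempty) :
    domReg X Y ⊆ domReg X' Y' := fun z hz =>
  le_trans (infDist_le_infDist_of_subset hX hXne)
    (le_trans hz (infDist_le_infDist_of_subset hY hYne))

lemma domReg_union {M : Type*} [MetricSpace M] (X Y : Set M) :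
    domReg X Y ∪ domReg Y X = univ := by
  ext z; simp only [mem_union, mem_univ, iff_true, domReg, mem_setOf_eq]
  exact le_total _ _

lemma mem_domReg_of_mem {M : Type*} [MetricSpace M] {X : Set M} (Y : Set M) {z : M}
    (hz : z ∈ X) : z ∈ domReg X Y := by
  simp only [domReg, mem_setOf_eq, infDist_zero_of_mem hz]
  exact infDist_nonneg

lemma mem_domReg {M : Type*} [MetricSpace M] {X Y : Set M} {z : M} :
    z ∈ domReg X Y ↔ infDist z X ≤ infDist z Y := Iff.rfl

/-- in a proper space, the infimum distance to a nested intersection of closed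
nonempty sets is controlled by the distances to the individual sets. -/
lemma infDist_iInter_le {M : Type*} [MetricSpace M] [ProperSpace M]
    (T : ℕ → Set M) (hcl : ∀ n, IsClosed (T n)) (hne : ∀ n, (T n).Nonempty)
    (hanti : ∀ n, T (n + 1) ⊆ T n) (z : M) (c : ℝ)
    (hc : ∀ n, infDist z (T n) ≤ c) : infDist z (⋂ n, T n) ≤ c := by
  have hmono : Antitone T := antitone_nat_of_succ_le hanti
  have hc0 : 0 ≤ c := le_trans infDist_nonneg (hc 0)
  -- choose near-optimal points
  have hx : ∀ n : ℕ, ∃ x ∈ T n, dist z x < c + 1 / (n + 1) := by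
    intro n
    have h1 : (0:ℝ) < 1 / (n + 1) := by positivity
    have h2 : c < c + 1 / (n + 1) := by linarith
    exact (infDist_lt_iff (hne n)).mp (lt_of_le_of_lt (hc n) h2)
  choose x hxT hxd using hx
  have hball : ∀ n, x n ∈ closedBall z (c + 1) := by
    intro n
    have h1 : 1 / ((n:ℝ) + 1) ≤ 1 := by
      rw [div_le_one (by positivity)]; linarith [Nat.cast_nonneg (α := ℝ) n]
    exact mem_closedBall'.mpr (le_trans (hxd n).le (by linarith))
  obtain ⟨a, -, φ, hφ, ha⟩ := (isCompact_closedBall z (c + 1)).tendsto_subseq hball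
  have haT : a ∈ ⋂ n, T n := by
    rw [mem_iInter]
    intro m
    refine (hcl m).mem_of_tendsto ha ?_
    filter_upwards [Filter.eventually_ge_atTop m] with n hn
    exact hmono (le_trans hn (hφ.le_apply)) (hxT (φ n))
  refine le_trans (infDist_le_dist_of_mem haT) ?_
  refine le_of_forall_pos_le_add ?_
  intro ε hε
  have hda : Filter.Tendsto (fun n => dist z (x (φ n))) Filter.atTop (nhds (dist z a)) :=
    (Continuous.tendsto (continuous_const.dist continuous_id) a).comp ha
  obtain ⟨N1, hN1⟩ := (Metric.tendsto_atTop.mp hda) (ε/2) (by linarith)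
  obtain ⟨N2, hN2⟩ := exists_nat_gt (2 / ε)
  set n := max N1 N2
  have h1 := hN1 n (le_max_left _ _)
  have h2 : 1 / ((φ n : ℝ) + 1) < ε / 2 := by
    have hφn : (N2:ℝ) ≤ (φ n : ℝ) := by
      exact_mod_cast le_trans (le_max_right N1 N2) (hφ.le_apply)
    rw [div_lt_iff₀ (by positivity)]
    have : 2 / ε < (φ n : ℝ) + 1 := by linarith
    calc (1:ℝ) = (2/ε) * (ε/2) := by field_simp
    _ < ((φ n:ℝ)+1) * (ε/2) := by
        apply mul_lt_mul_of_pos_right this (by linarith)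
    _ = (ε/2) * ((φ n:ℝ)+1) := by ring
  have h3 := hxd (φ n)
  have := abs_lt.mp (by simpa [Real.dist_eq] using h1)
  linarith [this.1, this.2]


/-- strict convexity argument: if `a` attains distance `c` from `z` to `A`, `b` is at
distance at least `c`, and the point moved a fraction `t` towards `a` is within `(1-t)c`
of `b`, then `b = a`. -/
lemma touch_eq {E : Type*} [NormedAddCommGroup E] [InnerProductSpace ℝ E]
    (z a b : E) (c t : ℝ) (hc : 0 < c) (ht0 : 0 < t) (ht1 : t < 1)
    (ha : ‖a - z‖ = c) (hb : c ≤ ‖b - z‖)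
    (hw : ‖(z + t • (a - z)) - b‖ ≤ (1 - t) * c) : b = a := by
  set u := a - z with hu
  set v := b - z with hv
  have hwv : (z + t • (a - z)) - b = t • u - v := by
    simp [hu, hv]; abel
  rw [hwv] at hw
  have e1 : ‖t • u - v‖ ^ 2 = t^2 * c^2 - 2 * (t * inner ℝ u v) + ‖v‖^2 := by
    rw [norm_sub_sq_real, norm_smul, real_inner_smul_left, ha]
    rw [Real.norm_eq_abs, abs_of_pos ht0]
    ring
  have e2 : ‖t • u - v‖ ^ 2 ≤ ((1-t)*c)^2 := by
    have h0 : (0:ℝ) ≤ ‖t • u - v‖ := norm_nonneg _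
    nlinarith [hw]
  have e3 : ‖v - u‖^2 = ‖v‖^2 - 2 * inner ℝ v u + c^2 := by
    rw [norm_sub_sq_real, ha]
  have hsymm : (inner ℝ v u : ℝ) = inner ℝ u v := real_inner_comm u v
  have e4 : ‖v - u‖^2 ≤ 0 := by
    have hb2 : c^2 ≤ ‖v‖^2 := by nlinarith [norm_nonneg v]
    -- from e1, e2: t^2 c^2 - 2 t s + ‖v‖^2 ≤ (1-t)^2 c^2
    have key : t^2 * c^2 - 2*(t * inner ℝ u v) + ‖v‖^2 ≤ ((1-t)*c)^2 := by
      rw [← e1]; exact e2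
    rw [e3, hsymm]
    nlinarith [key, hb2]
  have h5 : ‖v - u‖ = 0 := by nlinarith [norm_nonneg (v - u)]
  have h6 : v = u := sub_eq_zero.mp (norm_eq_zero.mp h5)
  exact sub_left_inj.mp h6

lemma bisector_mem {E : Type*} [NormedAddCommGroup E] [InnerProductSpace ℝ E] [ProperSpace E]
    (A B RS : Set E)
    (hAcl : IsClosed A) (hAne : A.Nonempty) (hBcl : IsClosed B) (hBne : B.Nonempty)
    (hAB : Disjoint A B) (hRcl : IsClosed RS) (z : E)
    (hz : infDist z A = infDist z B)
    (hside : ∀ w, infDist w A < infDist w B → w ∈ RS) : z ∈ RS := by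
  set c := infDist z A with hcdef
  rcases eq_or_lt_of_le (infDist_nonneg : 0 ≤ c) with hc0 | hc0
  · -- c = 0 : contradiction with disjointness
    exfalso
    have hzA : z ∈ A := (hAcl.mem_iff_infDist_zero hAne).mpr hc0.symm
    have hzB : z ∈ B := (hBcl.mem_iff_infDist_zero hBne).mpr (hz ▸ hc0.symm)
    exact hAB.ne_of_mem hzA hzB rfl
  · obtain ⟨a, haA, hda⟩ := hAcl.exists_infDist_eq_dist hAne z
    have hna : ‖a - z‖ = c := by rw [← dist_eq_norm, dist_comm, ← hda]
    rw [← hRcl.closure_eq]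
    rw [Metric.mem_closure_iff]
    intro ε hε
    set t := min (1/2 : ℝ) (ε / (2 * c)) with htdef
    have ht0 : 0 < t := lt_min (by norm_num) (by positivity)
    have ht1 : t < 1 := lt_of_le_of_lt (min_le_left _ _) (by norm_num)
    set w := z + t • (a - z) with hwdef
    refine ⟨w, ?_, ?_⟩
    · -- w ∈ RS
      apply hside
      have h1 : infDist w A ≤ (1 - t) * c := by
        refine le_trans (infDist_le_dist_of_mem haA) ?_
        rw [dist_eq_norm]
        have : w - a = (1 - t) • (z - a) := by
          rw [hwdef]; module
        rw [this, norm_smul, Real.norm_eq_abs, abs_of_pos (by linarith : (0:ℝ) < 1 - t),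
          ← dist_eq_norm, ← hda, ← hcdef]
      refine lt_of_le_of_lt h1 ?_
      obtain ⟨b, hbB, hdb⟩ := hBcl.exists_infDist_eq_dist hBne w
      rw [hdb]
      by_contra hcon
      push_neg at hcon
      have hzb : c ≤ ‖b - z‖ := by
        rw [← dist_eq_norm, dist_comm, hz]
        exact infDist_le_dist_of_mem hbB
      have hwb : ‖(z + t • (a - z)) - b‖ ≤ (1 - t) * c := by
        rw [← dist_eq_norm]
        exact hcon
      have hba := touch_eq z a b c t hc0 ht0 ht1 hna hzb hwb
      exact hAB.ne_of_mem haA hbB hba.symm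
    · have : dist z w = t * c := by
        rw [dist_eq_norm, hwdef]
        have : z - (z + t • (a - z)) = t • (z - a) := by module
        rw [this, norm_smul, Real.norm_eq_abs, abs_of_pos ht0, ← dist_eq_norm,
          ← hda, ← hcdef]
      rw [this]
      calc t * c ≤ (ε / (2 * c)) * c := by
            exact mul_le_mul_of_nonneg_right (min_le_right _ _) hc0.le
      _ = ε / 2 := by
          have hc' : c ≠ 0 := hc0.ne'
          rw [div_mul_eq_mul_div, mul_div_mul_right _ _ hc']
      _ < ε := by linarith

/-- Iterating the operator `F` from an element below its image yields, in the limit,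
a `k`-gradation `(closure (R^∞ i), S^∞ i)` between `P` and `Q` in Euclidean space. -/
theorem iteration_gives_kgradation {d : ℕ} (k : ℕ) (hk : 2 ≤ k)
    (P Q : Set (EuclideanSpace ℝ (Fin d))) (hPne : P.Nonempty) (hQne : Q.Nonempty)
    (hPcl : IsClosed P) (hQcl : IsClosed Q) (hPQ : Disjoint P Q)
    (R S : ℕ → ℕ → Set (EuclideanSpace ℝ (Fin d)))
    -- conventions `R^n_0 = P` and `S^n_k = Q` for all `n`
    (hconv : ∀ n, R n 0 = P ∧ S n k = Q)
    -- the initial tuple belongs to the lattice `𝓛`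
    (hlat : ∀ i, 0 < i → i < k → P ⊆ R 0 i ∧ Q ⊆ S 0 i ∧ R 0 i ∪ S 0 i = univ)
    -- the iteration `(R^{n+1}, S^{n+1}) = F (R^n, S^n)`
    (hiter : ∀ n, ∀ i, 0 < i → i < k →
      R (n + 1) i = domReg (R n (i - 1)) (S n (i + 1)) ∧
      S (n + 1) i = domReg (S n (i + 1)) (R n (i - 1)))
    -- the initial tuple is below its image: `(R^0, S^0) ≤ F (R^0, S^0)`
    (hle : ∀ i, 0 < i → i < k → R 0 i ⊆ R 1 i ∧ S 1 i ⊆ S 0 i) :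
    (closure (⋃ n, R n 0) = P) ∧ ((⋂ n, S n k) = Q) ∧
      ∀ i, 0 < i → i < k →
        closure (⋃ n, R n i)
          = domReg (closure (⋃ n, R n (i - 1))) (⋂ n, S n (i + 1)) ∧
        (⋂ n, S n i)
          = domReg (⋂ n, S n (i + 1)) (closure (⋃ n, R n (i - 1))) := by
  have hR0 : ∀ n, R n 0 = P := fun n => (hconv n).1
  have hSk : ∀ n, S n k = Q := fun n => (hconv n).2
  -- P and Q sit inside all the R's resp. S's
  have hPQin : ∀ n, (∀ i, i < k → P ⊆ R n i) ∧ (∀ i, 0 < i → i ≤ k → Q ⊆ S n i) := by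
    intro n
    induction n with
    | zero =>
      refine ⟨fun i hik => ?_, fun i h1 h2 => ?_⟩
      · rcases Nat.eq_zero_or_pos i with h | h
        · subst h; rw [hR0]
        · exact (hlat i h hik).1
      · rcases eq_or_lt_of_le h2 with h | h
        · subst h; rw [hSk]
        · exact (hlat i h1 h).2.1
    | succ n ih =>
      refine ⟨fun i hik => ?_, fun i h1 h2 => ?_⟩
      · rcases Nat.eq_zero_or_pos i with h | h
        · subst h; rw [hR0]
        · rw [(hiter n i h hik).1]
          exact fun p hp => mem_domReg_of_mem _ (ih.1 (i-1) (by omega) hp)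
      · rcases eq_or_lt_of_le h2 with h | h
        · subst h; rw [hSk]
        · rw [(hiter n i h1 h).2]
          exact fun q hq => mem_domReg_of_mem _ (ih.2 (i+1) (by omega) (by omega) hq)
  have hRne : ∀ n i, i < k → (R n i).Nonempty := fun n i h => hPne.mono ((hPQin n).1 i h)
  have hSne : ∀ n i, 0 < i → i ≤ k → (S n i).Nonempty :=
    fun n i h1 h2 => hQne.mono ((hPQin n).2 i h1 h2)
  -- monotonicity in n
  have hmn : ∀ n, (∀ i, i < k → R n i ⊆ R (n+1) i) ∧
      (∀ i, 0 < i → i ≤ k → S (n+1) i ⊆ S n i) := by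
    intro n
    induction n with
    | zero =>
      refine ⟨fun i hik => ?_, fun i h1 h2 => ?_⟩
      · rcases Nat.eq_zero_or_pos i with h | h
        · subst h; rw [hR0, hR0]
        · exact (hle i h hik).1
      · rcases eq_or_lt_of_le h2 with h | h
        · subst h; rw [hSk, hSk]
        · exact (hle i h1 h).2
    | succ n ih =>
      refine ⟨fun i hik => ?_, fun i h1 h2 => ?_⟩
      · rcases Nat.eq_zero_or_pos i with h | h
        · subst h; rw [hR0, hR0]
        · rw [(hiter n i h hik).1, (hiter (n+1) i h hik).1]
          exact domReg_mono (ih.1 (i-1) (by omega)) (hRne n (i-1) (by omega))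
            (ih.2 (i+1) (by omega) (by omega)) (hSne (n+1) (i+1) (by omega) (by omega))
      · rcases eq_or_lt_of_le h2 with h | h
        · subst h; rw [hSk, hSk]
        · rw [(hiter n i h1 h).2, (hiter (n+1) i h1 h).2]
          exact domReg_mono (ih.2 (i+1) (by omega) (by omega))
            (hSne (n+1) (i+1) (by omega) (by omega))
            (ih.1 (i-1) (by omega)) (hRne n (i-1) (by omega))
  have hRmono : ∀ i, i < k → Monotone (fun n => R n i) :=
    fun i h => monotone_nat_of_le_succ (fun n => (hmn n).1 i h)
  have hSanti : ∀ i, 0 < i → i ≤ k → Antitone (fun n => S n i) :=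
    fun i h1 h2 => antitone_nat_of_succ_le (fun n => (hmn n).2 i h1 h2)
  -- cover
  have hUn : ∀ n i, 0 < i → i < k → R n i ∪ S n i = univ := by
    intro n i h1 h2
    cases n with
    | zero => exact (hlat i h1 h2).2.2
    | succ n => rw [(hiter n i h1 h2).1, (hiter n i h1 h2).2]; exact domReg_union _ _
  have hcover : ∀ i, 0 < i → i < k → ∀ z, z ∈ (⋃ n, R n i) ∨ z ∈ (⋂ n, S n i) := by
    intro i h1 h2 z
    by_cases hz : z ∈ (⋂ n, S n i)
    · exact Or.inr hz
    · simp only [mem_iInter, not_forall] at hz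
      obtain ⟨m, hm⟩ := hz
      have := hUn m i h1 h2
      have hzm : z ∈ R m i ∪ S m i := this ▸ mem_univ z
      rcases hzm with h | h
      · exact Or.inl (mem_iUnion.mpr ⟨m, h⟩)
      · exact absurd h hm
  -- closedness of the S-intersections
  have hBeq : ∀ i, 0 < i → i < k → (⋂ n, S n i) = ⋂ n, S (n+1) i := by
    intro i h1 h2
    refine Subset.antisymm (fun z hz => mem_iInter.mpr fun n => mem_iInter.mp hz (n+1)) ?_
    intro z hz
    refine mem_iInter.mpr fun n => ?_
    cases n with
    | zero => exact (hmn 0).2 i h1 (by omega) (mem_iInter.mp hz 0)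
    | succ m => exact mem_iInter.mp hz m
  have hBcl : ∀ i, 0 < i → i ≤ k → IsClosed (⋂ n, S n i) := by
    intro i h1 h2
    rcases eq_or_lt_of_le h2 with h | h
    · subst h; simp only [hSk, iInter_const]; exact hQcl
    · rw [hBeq i h1 h]
      exact isClosed_iInter fun n => by
        rw [(hiter n i h1 h).2]; exact domReg_isClosed _ _
  have hBne : ∀ i, 0 < i → i ≤ k → (⋂ n, S n i).Nonempty := by
    intro i h1 h2
    obtain ⟨q, hq⟩ := hQne
    exact ⟨q, mem_iInter.mpr fun n => (hPQin n).2 i h1 h2 hq⟩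
  have hAne : ∀ i, i < k → (closure (⋃ n, R n i)).Nonempty := by
    intro i h
    obtain ⟨p, hp⟩ := hPne
    exact ⟨p, subset_closure (mem_iUnion.mpr ⟨0, (hPQin 0).1 i h hp⟩)⟩
  have hUne : ∀ i, i < k → (⋃ n, R n i).Nonempty := by
    intro i h
    obtain ⟨p, hp⟩ := hPne
    exact ⟨p, mem_iUnion.mpr ⟨0, (hPQin 0).1 i h hp⟩⟩
  -- infDist facts
  have hinfA_le : ∀ (z : EuclideanSpace ℝ (Fin d)) i n, i < k →
      infDist z (closure (⋃ m, R m i)) ≤ infDist z (R n i) := by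
    intro z i n h
    rw [infDist_closure]
    exact infDist_le_infDist_of_subset (subset_iUnion (fun m => R m i) n) (hRne n i h)
  have hinfB_le : ∀ (z : EuclideanSpace ℝ (Fin d)) i n, 0 < i → i ≤ k →
      infDist z (S n i) ≤ infDist z (⋂ m, S m i) := by
    intro z i n h1 h2
    exact infDist_le_infDist_of_subset (iInter_subset (fun m => S m i) n) (hBne i h1 h2)
  have hinfA_ex : ∀ (z : EuclideanSpace ℝ (Fin d)) i, i < k → ∀ ε : ℝ, 0 < ε →
      ∃ n, infDist z (R n i) < infDist z (closure (⋃ m, R m i)) + ε := by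
    intro z i hik ε hε
    have h1 : infDist z (⋃ m, R m i) < infDist z (closure (⋃ m, R m i)) + ε := by
      rw [infDist_closure]; linarith
    obtain ⟨y, hy, hdy⟩ := (infDist_lt_iff (hUne i hik)).mp h1
    obtain ⟨n, hn⟩ := mem_iUnion.mp hy
    exact ⟨n, lt_of_le_of_lt (infDist_le_dist_of_mem hn) hdy⟩
  -- membership in S-iterates from the limit inequality
  have hSmem : ∀ i, 0 < i → i < k → ∀ z : EuclideanSpace ℝ (Fin d),
      infDist z (⋂ n, S n (i+1)) ≤ infDist z (closure (⋃ n, R n (i-1))) →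
      z ∈ ⋂ n, S n i := by
    intro i h1 h2 z hz
    have hstep : ∀ j, z ∈ S (j+1) i := by
      intro j
      rw [(hiter j i h1 h2).2]
      refine le_trans (hinfB_le z (i+1) j (by omega) (by omega)) ?_
      exact le_trans hz (hinfA_le z (i-1) j (by omega))
    refine mem_iInter.mpr fun n => ?_
    cases n with
    | zero => exact (hmn 0).2 i h1 (by omega) (hstep 0)
    | succ m => exact hstep m
  -- the key fixed point identity for the S-side
  have hE : ∀ i, 0 < i → i < k →
      (⋂ n, S n i) = domReg (⋂ n, S n (i+1)) (closure (⋃ n, R n (i-1))) := by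
    intro i h1 h2
    refine Subset.antisymm ?_ (fun z hz => hSmem i h1 h2 z hz)
    intro z hz
    rw [mem_domReg]
    refine le_of_forall_pos_le_add ?_
    intro ε hε
    obtain ⟨m0, hm0⟩ := hinfA_ex z (i-1) (by omega) ε hε
    -- apply the compactness lemma to the tail of the S-sequence
    have key := infDist_iInter_le (fun n => S (n + (m0+1)) (i+1))
      (fun n => ?_) (fun n => hSne (n + (m0+1)) (i+1) (by omega) (by omega))
      (fun n => hSanti (i+1) (by omega) (by omega) (by omega : n + (m0+1) ≤ n+1 + (m0+1)))
      z (infDist z (closure (⋃ n, R n (i-1))) + ε) ?_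
    · have heq : (⋂ n, S (n + (m0+1)) (i+1)) = ⋂ n, S n (i+1) := by
        refine Subset.antisymm ?_
          (fun w hw => mem_iInter.mpr fun n => mem_iInter.mp hw (n + (m0+1)))
        intro w hw
        refine mem_iInter.mpr fun n => ?_
        exact hSanti (i+1) (by omega) (by omega) (Nat.le_add_right n (m0+1))
          (mem_iInter.mp hw n)
      rw [heq] at key
      exact key
    · -- closedness of each tail set
      show IsClosed (S (n + (m0+1)) (i+1))
      rcases eq_or_lt_of_le (by omega : i + 1 ≤ k) with h | h
      · rw [show i + 1 = k from h, hSk]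
        exact hQcl
      · rw [show n + (m0+1) = (n + m0) + 1 from by omega, (hiter (n+m0) (i+1) (by omega) h).2]
        exact domReg_isClosed _ _
    · -- the bound
      intro n
      have hzm : z ∈ S (n + (m0+1) + 1) i := mem_iInter.mp hz (n + (m0+1) + 1)
      rw [(hiter (n + (m0+1)) i h1 h2).2] at hzm
      refine le_trans hzm ?_
      refine le_trans (infDist_le_infDist_of_subset
        (hRmono (i-1) (by omega) (by omega : m0 ≤ n + (m0+1))) (hRne m0 (i-1) (by omega))) ?_
      exact hm0.le
  -- chains along the index
  have hAchain : ∀ j, j + 1 < k →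
      closure (⋃ n, R n j) ⊆ closure (⋃ n, R n (j+1)) := by
    intro j hj
    refine closure_mono (iUnion_subset fun n => ?_)
    have hstep : R n j ⊆ R (n+1) (j+1) := by
      rw [(hiter n (j+1) (by omega) hj).1]
      rw [show j + 1 - 1 = j from by omega]
      exact fun w hw => mem_domReg_of_mem _ hw
    exact subset_trans hstep (subset_iUnion (fun m => R m (j+1)) (n+1))
  have hBchain : ∀ j, 0 < j → j + 1 ≤ k → (⋂ n, S n (j+1)) ⊆ ⋂ n, S n j := by
    intro j h1 h2 z hz
    have hstep : ∀ m, z ∈ S (m+1) j := by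
      intro m
      rw [(hiter m j h1 (by omega)).2]
      rw [mem_domReg, infDist_zero_of_mem (mem_iInter.mp hz m)]
      exact infDist_nonneg
    refine mem_iInter.mpr fun n => ?_
    cases n with
    | zero => exact (hmn 0).2 j h1 (by omega) (hstep 0)
    | succ m => exact hstep m
  -- the easy inclusion for the R-side
  have hAD : ∀ i, 0 < i → i < k → closure (⋃ n, R n i) ⊆
      domReg (closure (⋃ n, R n (i-1))) (⋂ n, S n (i+1)) := by
    intro i h1 h2
    refine closure_minimal (iUnion_subset fun n => ?_) (domReg_isClosed _ _)
    have hsucc : ∀ m, R (m+1) i ⊆ domReg (closure (⋃ n, R n (i-1))) (⋂ n, S n (i+1)) := by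
      intro m
      rw [(hiter m i h1 h2).1]
      refine domReg_mono ?_ (hRne m (i-1) (by omega)) ?_ (hBne (i+1) (by omega) (by omega))
      · exact subset_trans (subset_iUnion (fun n => R n (i-1)) m) subset_closure
      · exact iInter_subset (fun n => S n (i+1)) m
    cases n with
    | zero => exact subset_trans ((hmn 0).1 i h2) (hsucc 0)
    | succ m => exact hsucc m
  -- closure (⋃ n, R n 0) = P
  have hA0 : closure (⋃ n, R n 0) = P := by
    have e : (⋃ n, R n 0) = P :=
      Subset.antisymm (iUnion_subset fun n => (hR0 n).le) ((hR0 0) ▸ subset_iUnion (fun n => R n 0) 0)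
    rw [e, hPcl.closure_eq]
  have hBk : (⋂ n, S n k) = Q := by
    refine Subset.antisymm (fun z hz => (hSk 0) ▸ mem_iInter.mp hz 0)
      (fun q hq => mem_iInter.mpr fun n => (hSk n).symm ▸ hq)
  -- adjacency: going down to P
  have hdown : ∀ j, j + 1 ≤ k → ∀ z, z ∈ closure (⋃ n, R n j) →
      z ∈ (⋂ n, S n (j+1)) → z ∈ P := by
    intro j
    induction j with
    | zero => intro _ z hzA _; rwa [hA0] at hzA
    | succ j ih =>
      intro hjk z hzA hzB
      have h1 := hAD (j+1) (by omega) (by omega) hzA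
      rw [mem_domReg, show j + 1 - 1 = j from by omega,
        infDist_zero_of_mem hzB] at h1
      have hzAj : z ∈ closure (⋃ n, R n j) := by
        rw [(isClosed_closure).mem_iff_infDist_zero (hAne j (by omega))]
        exact le_antisymm h1 infDist_nonneg
      have hzBj : z ∈ ⋂ n, S n (j+1) := hBchain (j+1) (by omega) (by omega) hzB
      exact ih (by omega) z hzAj hzBj
  -- adjacency: going up to Q
  have hup : ∀ m, ∀ j, j + 1 + m = k → ∀ z, z ∈ closure (⋃ n, R n j) →
      z ∈ (⋂ n, S n (j+1)) → z ∈ Q := by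
    intro m
    induction m with
    | zero => intro j hj z _ hzB; rw [← hBk, ← show j + 1 = k from by omega]; exact hzB
    | succ m ih =>
      intro j hj z hzA hzB
      have hE1 := hE (j+1) (by omega) (by omega)
      rw [hE1, mem_domReg, show j + 1 - 1 = j from by omega,
        infDist_zero_of_mem hzA] at hzB
      have hzB2 : z ∈ ⋂ n, S n (j+2) := by
        rw [(hBcl (j+2) (by omega) (by omega)).mem_iff_infDist_zero
          (hBne (j+2) (by omega) (by omega))]
        exact le_antisymm hzB infDist_nonneg
      have hzA2 : z ∈ closure (⋃ n, R n (j+1)) := hAchain j (by omega) hzA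
      exact ih (j+1) (by omega) z hzA2 hzB2
  have hadj : ∀ j, j + 1 ≤ k → ∀ z, z ∈ closure (⋃ n, R n j) →
      z ∈ (⋂ n, S n (j+1)) → False := by
    intro j hj z hzA hzB
    exact hPQ.ne_of_mem (hdown j hj z hzA hzB) (hup (k - (j+1)) j (by omega) z hzA hzB) rfl
  -- the k-gradation identity for the R-side
  have hmain : ∀ i, 0 < i → i < k → closure (⋃ n, R n i)
      = domReg (closure (⋃ n, R n (i-1))) (⋂ n, S n (i+1)) := by
    intro i h1 h2
    refine Subset.antisymm (hAD i h1 h2) ?_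
    intro z hz
    rcases hcover i h1 h2 z with hc | hc
    · exact subset_closure hc
    · -- z lies in the S-side limit; on the bisector
      have hc' := hc
      rw [hE i h1 h2, mem_domReg] at hc'
      rw [mem_domReg] at hz
      have heq : infDist z (closure (⋃ n, R n (i-1))) = infDist z (⋂ n, S n (i+1)) :=
        le_antisymm hz hc'
      refine bisector_mem (closure (⋃ n, R n (i-1))) (⋂ n, S n (i+1))
        (closure (⋃ n, R n i)) isClosed_closure (hAne (i-1) (by omega))
        (hBcl (i+1) (by omega) (by omega)) (hBne (i+1) (by omega) (by omega))
        ?_ isClosed_closure z heq ?_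
      · -- disjointness of closure (⋃ R n (i-1)) and ⋂ S n (i+1)
        refine Set.disjoint_left.mpr fun w hw1 hw2 => ?_
        have hw2' : w ∈ ⋂ n, S n i := hBchain i h1 (by omega) hw2
        have : w ∈ ⋂ n, S n ((i-1)+1) := by rwa [show i - 1 + 1 = i from by omega]
        exact hadj (i-1) (by omega) w hw1 this
      · -- strict side condition
        intro w hw
        rcases hcover i h1 h2 w with hcw | hcw
        · exact subset_closure hcw
        · exfalso
          rw [hE i h1 h2, mem_domReg] at hcw
          exact absurd (lt_of_le_of_lt hcw hw) (lt_irrefl _)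
  exact ⟨hA0, hBk, fun i h1 h2 => ⟨hmain i h1 h2, hE i h1 h2⟩⟩
end
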